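/- Let Ω ⊂ ℝ² be a bounded measurable set, a ∈ ℝ, c > 0, and L1, L2, L3, L4 real with L1 + L2 > 0 and L1 + L3 > 0; set ν = min{L1 + L2, L1 + L3}. Let Q : Ω → S^(2) be continuously differentiable with |∇Q| square-integrable on Ω, and suppose |Q(x)| ≤ M for all x ∈ Ω, where M ≥ 0 satisfies ν − |L4| M > 0. Then the Landau–de Gennes energy satisfies E[Q] ≥ (ν − |L4| M) ∫_Ω |∇Q|² dx − (a²/(4c)) |Ω|, where |Ω| is the Lebesgue measure of Ω. -/

import Mathlib

open MeasureTheory Set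

noncomputable section

/-- The plane `ℝ²`. -/
abbrev E2 := EuclideanSpace ℝ (Fin 2)

/-- Partial derivative `∂_k f` of a scalar function on `ℝ²`. -/
noncomputable def pd (k : Fin 2) (f : E2 → ℝ) (x : E2) : ℝ :=
  fderiv ℝ f x (EuclideanSpace.single k 1)

/-- Frobenius norm `|M| = √(∑ M_{ij}²)` of a real 2×2 matrix. -/
noncomputable def fnorm (M : Matrix (Fin 2) (Fin 2) ℝ) : ℝ :=
  Real.sqrt (∑ i, ∑ j, (M i j) ^ 2)

/-- `|∇Q|² = ∑_{k,i,j} (∂_k Q_{ij})²`. -/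
noncomputable def gradsq (Q : E2 → Matrix (Fin 2) (Fin 2) ℝ) (x : E2) : ℝ :=
  ∑ k, ∑ i, ∑ j, (pd k (fun y => Q y i j) x) ^ 2

/-- The 2D Landau–de Gennes energy density
`L1|∇Q|² + L2 ∂_jQ_{ik}∂_kQ_{ij} + L3 ∂_jQ_{ij}∂_kQ_{ik}
  + L4 Q_{lk}∂_kQ_{ij}∂_lQ_{ij} + (a/2)tr(Q²) + (c/4)(tr(Q²))²`. -/
noncomputable def ldgDensity (a c L1 L2 L3 L4 : ℝ)
    (Q : E2 → Matrix (Fin 2) (Fin 2) ℝ) (x : E2) : ℝ :=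
  L1 * gradsq Q x
  + L2 * (∑ i, ∑ j, ∑ k, pd j (fun y => Q y i k) x * pd k (fun y => Q y i j) x)
  + L3 * (∑ i, (∑ j, pd j (fun y => Q y i j) x) * (∑ k, pd k (fun y => Q y i k) x))
  + L4 * (∑ l, ∑ k, Q x l k *
      (∑ i, ∑ j, pd k (fun y => Q y i j) x * pd l (fun y => Q y i j) x))
  + a / 2 * (Q x * Q x).trace
  + c / 4 * ((Q x * Q x).trace) ^ 2

section Aux
open Metric Filter Topology Asymptotics ENNReal

private lemma ae_fderiv_eq_zero {s : Set E2} (hs : MeasurableSet s) {f : E2 → ℝ}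
    (hf : Differentiable ℝ f) (h0 : ∀ x ∈ s, f x = 0) :
    ∀ᵐ x ∂(volume.restrict s), fderiv ℝ f x = 0 := by
  filter_upwards [Besicovitch.ae_tendsto_measure_inter_div volume s,
    ae_restrict_mem hs] with x hx hxs
  by_contra hL
  set L := fderiv ℝ f x with hLdef
  -- the gradient vector
  set w : E2 := (InnerProductSpace.toDual ℝ E2).symm L with hw
  have hwn : ‖w‖ = ‖L‖ := (InnerProductSpace.toDual ℝ E2).symm.norm_map L
  have hLpos : 0 < ‖L‖ := by
    simpa [norm_pos_iff] using hL
  have hwne : w ≠ 0 := by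
    simp only [← norm_pos_iff, hwn]; exact hLpos
  set e : E2 := ‖w‖⁻¹ • w with he
  have hen : ‖e‖ = 1 := by
    rw [he, norm_smul, norm_inv, norm_norm, inv_mul_cancel₀ (norm_ne_zero_iff.2 hwne)]
  -- orthonormal basis with b 0 = e
  obtain ⟨b, hb0⟩ : ∃ b : OrthonormalBasis (Fin 2) ℝ E2, b 0 = e := by
    have hcard : Module.finrank ℝ E2 = Fintype.card (Fin 2) := by simp
    have horto : Orthonormal ℝ (({0} : Set (Fin 2)).restrict ![e, e]) := by
      constructor
      · rintro ⟨i, hi⟩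
        simp only [Set.mem_singleton_iff] at hi
        subst hi
        exact hen
      · rintro ⟨i, hi⟩ ⟨j, hj⟩ hij
        simp only [Set.mem_singleton_iff] at hi hj
        exact absurd (Subtype.ext (hi.trans hj.symm)) hij
    obtain ⟨b, hb⟩ := horto.exists_orthonormalBasis_extension_of_card_eq hcard
    exact ⟨b, by simpa using hb 0 rfl⟩
  -- little-o estimate
  have hdiff : HasFDerivAt f L x := (hf x).hasFDerivAt
  have hev := isLittleO_iff.1 hdiff.isLittleO (by positivity : (0:ℝ) < ‖L‖/2)
  rw [Metric.eventually_nhds_iff] at hev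
  obtain ⟨δ, hδ, hball⟩ := hev
  -- eventual ratio bound
  have hrat : ∀ r : ℝ, 0 < r → r < δ →
      volume (s ∩ closedBall x r) / volume (closedBall x r) ≤ ENNReal.ofReal 0.9 := by
    intro r hr hrδ
    set q := b.repr x with hq
    set Tset : Set E2 := b.repr ⁻¹'
      {v : EuclideanSpace ℝ (Fin 2) | |v 0 - q 0| ≤ r/2 ∧ |v 1 - q 1| ≤ r} with hT
    have hsub : s ∩ closedBall x r ⊆ Tset := by
      rintro y ⟨hys, hyb⟩
      have hyx : ‖y - x‖ ≤ r := by
        rw [← dist_eq_norm]; exact mem_closedBall.1 hyb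
      have hdy : dist y x < δ := lt_of_le_of_lt (mem_closedBall.1 hyb) hrδ
      have h1 := hball hdy
      rw [h0 y hys, h0 x hxs, sub_zero, zero_sub, norm_neg] at h1
      have hLyx : ‖L (y - x)‖ ≤ ‖L‖/2 * r := by
        refine h1.trans ?_
        have := mul_le_mul_of_nonneg_left hyx (by positivity : (0:ℝ) ≤ ‖L‖/2)
        linarith
      constructor
      · have hrepr : b.repr y 0 - q 0 = (inner ℝ e (y - x) : ℝ) := by
          rw [hq, ← hb0, ← b.repr_apply_apply (y - x) 0, map_sub]; rfl
        rw [hrepr, he, real_inner_smul_left]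
        have hinner : (inner ℝ w (y - x) : ℝ) = L (y - x) :=
          InnerProductSpace.toDual_symm_apply
        rw [hinner, abs_mul, abs_inv, abs_norm]
        calc ‖w‖⁻¹ * |L (y - x)| ≤ ‖w‖⁻¹ * (‖L‖/2 * r) := by
              apply mul_le_mul_of_nonneg_left _ (by positivity)
              simpa [Real.norm_eq_abs] using hLyx
          _ = r / 2 := by
              rw [hwn]; field_simp
      · have hrepr : b.repr y 1 - q 1 = (inner ℝ (b 1) (y - x) : ℝ) := by
          rw [hq, ← b.repr_apply_apply (y - x) 1, map_sub]; rfl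
        rw [hrepr]
        calc |(inner ℝ (b 1) (y - x) : ℝ)| ≤ ‖b 1‖ * ‖y - x‖ := abs_real_inner_le_norm _ _
          _ ≤ r := by rw [b.orthonormal.1 1, one_mul]; exact hyx
    have hbox : {v : EuclideanSpace ℝ (Fin 2) | |v 0 - q 0| ≤ r/2 ∧ |v 1 - q 1| ≤ r}
        = (MeasurableEquiv.toLp 2 (Fin 2 → ℝ)).symm ⁻¹'
          (Set.univ.pi fun i => Icc (q i - ![r/2, r] i) (q i + ![r/2, r] i)) := by
      ext v
      simp only [Set.mem_setOf_eq, Set.mem_preimage, Set.mem_pi, Set.mem_univ, forall_true_left,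
        Fin.forall_fin_two, Set.mem_Icc, MeasurableEquiv.coe_toLp_symm,
        Matrix.cons_val_zero, Matrix.cons_val_one, Matrix.head_cons]
      constructor
      · rintro ⟨h1, h2⟩
        rw [abs_sub_le_iff] at h1 h2
        exact ⟨⟨by linarith [h1.2], by linarith [h1.1]⟩, ⟨by linarith [h2.2], by linarith [h2.1]⟩⟩
      · rintro ⟨⟨h1, h2⟩, ⟨h3, h4⟩⟩
        rw [abs_sub_le_iff, abs_sub_le_iff]
        refine ⟨⟨by linarith, by linarith⟩, ⟨by linarith, by linarith⟩⟩
    have hμT : volume Tset = ENNReal.ofReal r * ENNReal.ofReal (2*r) := by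
      rw [hT, hbox]
      rw [b.measurePreserving_repr.measure_preimage]
      · rw [(EuclideanSpace.volume_preserving_symm_measurableEquiv_toLp (Fin 2)).measure_preimage]
        · rw [volume_pi_pi]
          rw [Fin.prod_univ_two]
          simp only [Matrix.cons_val_zero, Matrix.cons_val_one, Matrix.head_cons, Real.volume_Icc]
          congr 1 <;> [skip; skip] <;> congr 1 <;> ring
        · exact (MeasurableSet.univ_pi fun i => measurableSet_Icc).nullMeasurableSet
      · refine (MeasurableSet.preimage ?_ (MeasurableEquiv.measurable _)).nullMeasurableSet
        exact MeasurableSet.univ_pi fun i => measurableSet_Icc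
    have hμB : volume (closedBall x r) = ENNReal.ofReal (Real.pi * r^2) := by
      rw [EuclideanSpace.volume_closedBall (Fin 2) x r]
      norm_num [Real.sq_sqrt Real.pi_nonneg]
      rw [← ENNReal.ofReal_pow hr.le, ← ENNReal.ofReal_mul (by positivity)]
      ring_nf
    calc volume (s ∩ closedBall x r) / volume (closedBall x r)
        ≤ volume Tset / volume (closedBall x r) :=
          ENNReal.div_le_div_right (measure_mono hsub) _
      _ ≤ ENNReal.ofReal 0.9 := by
          rw [hμT, hμB]
          apply ENNReal.div_le_of_le_mul
          rw [← ENNReal.ofReal_mul hr.le, ← ENNReal.ofReal_mul (by norm_num)]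
          apply ENNReal.ofReal_le_ofReal
          nlinarith [Real.pi_gt_three, hr.le, sq_nonneg r]
  have hev2 : ∀ᶠ r in nhdsWithin (0:ℝ) (Set.Ioi 0),
      volume (s ∩ closedBall x r) / volume (closedBall x r) ≤ ENNReal.ofReal 0.9 := by
    filter_upwards [Ioo_mem_nhdsGT_of_mem ⟨le_refl (0:ℝ), hδ⟩] with r hr
    exact hrat r hr.1 hr.2
  have h1 : (1 : ℝ≥0∞) ≤ ENNReal.ofReal 0.9 := le_of_tendsto hx hev2
  have : (0.9 : ℝ) < 1 := by norm_num
  have := ENNReal.ofReal_lt_one.2 this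
  exact absurd h1 (not_le.2 this)

private lemma bulk_bound (a c t : ℝ) (hc : 0 < c) :
    -(a^2/(4*c)) ≤ a/2*t + c/4*t^2 := by
  have key : a/2*t + c/4*t^2 + a^2/(4*c) = (c*t+a)^2/(4*c) := by
    field_simp; ring
  nlinarith [div_nonneg (sq_nonneg (c*t+a)) (by linarith : (0:ℝ) ≤ 4*c)]

lemma elastic_bound (L1 L2 L3 ν u0 u1 v0 v1 : ℝ)
    (h2 : ν ≤ L1 + L2) (h3 : ν ≤ L1 + L3) :
    ν * (2*(u0^2+u1^2+v0^2+v1^2)) ≤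
      L1 * (2*(u0^2+u1^2+v0^2+v1^2))
      + L2 * ((u0^2+u1^2+v0^2+v1^2) + 2*(u1*v0 - u0*v1))
      + L3 * ((u0^2+u1^2+v0^2+v1^2) + 2*(u0*v1 - u1*v0)) := by
  nlinarith [mul_nonneg (by linarith : (0:ℝ) ≤ L1 + L2 - ν)
      (by positivity : (0:ℝ) ≤ (u1+v0)^2 + (u0-v1)^2),
    mul_nonneg (by linarith : (0:ℝ) ≤ L1 + L3 - ν)
      (by positivity : (0:ℝ) ≤ (u1-v0)^2 + (u0+v1)^2)]

lemma l4_bound (L4 M q00 q01 u0 u1 v0 v1 : ℝ) (hM0 : 0 ≤ M)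
    (hq : Real.sqrt (2*(q00^2 + q01^2)) ≤ M) :
    -(|L4| * M * (2*(u0^2+u1^2+v0^2+v1^2))) ≤
      L4 * (q00 * (2*(u0^2+v0^2)) + q01 * (2*(u0*u1+v0*v1))
        + q01 * (2*(u0*u1+v0*v1)) + (-q00) * (2*(u1^2+v1^2))) := by
  set A00 := 2*(u0^2+v0^2) with hA00
  set A11 := 2*(u1^2+v1^2) with hA11
  set A01 := 2*(u0*u1+v0*v1) with hA01
  have hA00n : 0 ≤ A00 := by positivity
  have hA11n : 0 ≤ A11 := by positivity
  have hCS : A01^2 ≤ A00 * A11 := by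
    rw [hA00, hA01, hA11]; nlinarith [sq_nonneg (u0*v1 - u1*v0)]
  have hqsq : 2*(q00^2 + q01^2) ≤ M^2 := by
    have h := pow_le_pow_left₀ (Real.sqrt_nonneg (2*(q00^2 + q01^2))) hq 2
    rwa [Real.sq_sqrt (by positivity)] at h
  have hT2 : (q00 * A00 + q01 * A01 + q01 * A01 + (-q00) * A11)^2
      ≤ (M * (A00 + A11))^2 := by
    nlinarith [sq_nonneg (q00 * (2*A01) - q01 * (A00 - A11)),
      sq_nonneg (A00 - A11), sq_nonneg (A00 + A11),
      mul_nonneg (mul_nonneg hM0 hM0) (sq_nonneg (A00 + A11)),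
      sq_nonneg q00, sq_nonneg q01, hCS, hqsq]
  have hTabs : |q00 * A00 + q01 * A01 + q01 * A01 + (-q00) * A11| ≤ M * (A00 + A11) :=
    abs_le_of_sq_le_sq hT2 (by positivity)
  have h5 : -(|L4| * (M * (A00+A11))) ≤
      L4 * (q00 * A00 + q01 * A01 + q01 * A01 + (-q00) * A11) := by
    have h6 : |L4 * (q00 * A00 + q01 * A01 + q01 * A01 + (-q00) * A11)|
        ≤ |L4| * (M * (A00+A11)) := by
      rw [abs_mul]
      exact mul_le_mul_of_nonneg_left hTabs (abs_nonneg _)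
    linarith [neg_abs_le (L4 * (q00 * A00 + q01 * A01 + q01 * A01 + (-q00) * A11))]
  calc -(|L4| * M * (2*(u0^2+u1^2+v0^2+v1^2))) = -(|L4| * (M * (A00+A11))) := by
        rw [hA00, hA11]; ring
    _ ≤ _ := h5

end Aux

/-- lower bound for the Landau–de Gennes energy under an
`L^∞` bound: if `|Q| ≤ M` on `Ω` with `ν − |L4| M > 0`, then
`E[Q] ≥ (ν − |L4| M) ∫_Ω |∇Q|² − (a²/(4c))|Ω|`. -/
theorem energy_lower_bound
    (Ω : Set E2) (hΩm : MeasurableSet Ω) (hΩb : Bornology.IsBounded Ω)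
    (a c L1 L2 L3 L4 : ℝ) (hc : 0 < c)
    (h12 : 0 < L1 + L2) (h13 : 0 < L1 + L3)
    (ν : ℝ) (hν : ν = min (L1 + L2) (L1 + L3))
    (M : ℝ) (hM0 : 0 ≤ M) (hM : 0 < ν - |L4| * M)
    (Q : E2 → Matrix (Fin 2) (Fin 2) ℝ)
    -- `Q` takes values in `S^(2)` and is continuously differentiable
    (hQsymm : ∀ x ∈ Ω, (Q x).IsSymm) (hQtr : ∀ x ∈ Ω, (Q x).trace = 0)
    (hQc1 : ∀ i j : Fin 2, ContDiff ℝ 1 (fun x => Q x i j))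
    -- `|∇Q|` is square integrable on `Ω`
    (hgrad : IntegrableOn (fun x => gradsq Q x) Ω volume)
    -- pointwise bound `|Q| ≤ M` on `Ω`
    (hQbound : ∀ x ∈ Ω, fnorm (Q x) ≤ M) :
    (∫ x in Ω, ldgDensity a c L1 L2 L3 L4 Q x)
      ≥ (ν - |L4| * M) * (∫ x in Ω, gradsq Q x)
        - a ^ 2 / (4 * c) * (volume Ω).toReal := by
  have hν2 : ν ≤ L1 + L2 := hν ▸ min_le_left _ _
  have hν3 : ν ≤ L1 + L3 := hν ▸ min_le_right _ _
  have hd : ∀ i j : Fin 2, Differentiable ℝ (fun x => Q x i j) :=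
    fun i j => (hQc1 i j).differentiable one_ne_zero
  -- a.e. symmetry of derivatives
  have h_ae1 := ae_fderiv_eq_zero hΩm ((hd 0 1).sub (hd 1 0))
    (fun x hx => by rw [Pi.sub_apply, (hQsymm x hx).apply 0 1, sub_self])
  have h_ae2 := ae_fderiv_eq_zero hΩm ((hd 0 0).add (hd 1 1))
    (fun x hx => by
      have := hQtr x hx
      rwa [Matrix.trace_fin_two] at this)
  -- pointwise bound a.e. on Ω
  have hpt : ∀ᵐ x ∂volume.restrict Ω,
      (ν - |L4| * M) * gradsq Q x - a^2/(4*c) ≤ ldgDensity a c L1 L2 L3 L4 Q x := by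
    filter_upwards [ae_restrict_mem hΩm, h_ae1, h_ae2] with x hxΩ hs1 hs2
    have heq1 : fderiv ℝ (fun y => Q y 0 1) x = fderiv ℝ (fun y => Q y 1 0) x := by
      have h := fderiv_sub (𝕜 := ℝ) (hd 0 1 x) (hd 1 0 x)
      rw [hs1] at h
      exact (sub_eq_zero.1 h.symm)
    have heq2 : fderiv ℝ (fun y => Q y 1 1) x = -(fderiv ℝ (fun y => Q y 0 0) x) := by
      have h := fderiv_add (𝕜 := ℝ) (hd 0 0 x) (hd 1 1 x)
      rw [hs2] at h
      exact eq_neg_of_add_eq_zero_right h.symm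
    have hps : ∀ k : Fin 2, pd k (fun y => Q y 1 0) x = pd k (fun y => Q y 0 1) x :=
      fun k => by unfold pd; rw [heq1]
    have hpt11 : ∀ k : Fin 2, pd k (fun y => Q y 1 1) x = -(pd k (fun y => Q y 0 0) x) :=
      fun k => by unfold pd; rw [heq2]; simp
    have hq10 : Q x 1 0 = Q x 0 1 := (hQsymm x hxΩ).apply 0 1
    have hq11 : Q x 1 1 = -(Q x 0 0) := by
      have := hQtr x hxΩ
      rw [Matrix.trace_fin_two] at this
      linarith
    have hfn : Real.sqrt (2*((Q x 0 0)^2 + (Q x 0 1)^2)) ≤ M := by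
      have h := hQbound x hxΩ
      unfold fnorm at h
      rw [Fin.sum_univ_two] at h
      rw [Fin.sum_univ_two, Fin.sum_univ_two, hq10, hq11] at h
      calc Real.sqrt (2*((Q x 0 0)^2 + (Q x 0 1)^2))
          = Real.sqrt ((Q x 0 0)^2 + (Q x 0 1)^2 + ((Q x 0 1)^2 + (-(Q x 0 0))^2)) := by
            congr 1; ring
        _ ≤ M := h
    have eb := elastic_bound L1 L2 L3 ν
      (pd 0 (fun y => Q y 0 0) x) (pd 1 (fun y => Q y 0 0) x)
      (pd 0 (fun y => Q y 0 1) x) (pd 1 (fun y => Q y 0 1) x) hν2 hν3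
    have lb := l4_bound L4 M (Q x 0 0) (Q x 0 1)
      (pd 0 (fun y => Q y 0 0) x) (pd 1 (fun y => Q y 0 0) x)
      (pd 0 (fun y => Q y 0 1) x) (pd 1 (fun y => Q y 0 1) x) hM0 hfn
    have bb := bulk_bound a c ((Q x * Q x).trace) hc
    unfold ldgDensity gradsq
    simp only [Fin.sum_univ_two, hps, hpt11, hq10, hq11]
    ring_nf
    ring_nf at eb lb bb
    linarith [eb, lb, bb]
  -- integrability of the density
  have hpdc : ∀ (k i j : Fin 2), Continuous fun x => pd k (fun y => Q y i j) x := by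
    intro k i j
    have h1 : Continuous fun x => fderiv ℝ (fun y => Q y i j) x :=
      (hQc1 i j).continuous_fderiv one_ne_zero
    exact (ContinuousLinearMap.apply ℝ ℝ (EuclideanSpace.single k (1:ℝ))).continuous.comp h1
  have hQe : ∀ i j : Fin 2, Continuous fun x => Q x i j := fun i j => (hQc1 i j).continuous
  have htrc : Continuous fun x => (Q x * Q x).trace := by
    have : (fun x => (Q x * Q x).trace) = fun x =>
        (Q x 0 0 * Q x 0 0 + Q x 0 1 * Q x 1 0) + (Q x 1 0 * Q x 0 1 + Q x 1 1 * Q x 1 1) := by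
      funext x
      simp [Matrix.trace_fin_two, Matrix.mul_apply, Fin.sum_univ_two]
    rw [this]
    exact (((hQe 0 0).mul (hQe 0 0)).add ((hQe 0 1).mul (hQe 1 0))).add
      (((hQe 1 0).mul (hQe 0 1)).add ((hQe 1 1).mul (hQe 1 1)))
  have hgc : Continuous fun x => gradsq Q x := by
    unfold gradsq
    exact continuous_finset_sum _ fun k _ => continuous_finset_sum _ fun i _ =>
      continuous_finset_sum _ fun j _ => (hpdc k i j).pow 2
  have hldc : Continuous fun x => ldgDensity a c L1 L2 L3 L4 Q x := by
    unfold ldgDensity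
    refine (((((continuous_const.mul hgc).add (continuous_const.mul ?_)).add
      (continuous_const.mul ?_)).add (continuous_const.mul ?_)).add
      (continuous_const.mul htrc)).add (continuous_const.mul (htrc.pow 2))
    · exact continuous_finset_sum _ fun i _ => continuous_finset_sum _ fun j _ =>
        continuous_finset_sum _ fun k _ => (hpdc j i k).mul (hpdc k i j)
    · exact continuous_finset_sum _ fun i _ =>
        (continuous_finset_sum _ fun j _ => hpdc j i j).mul
        (continuous_finset_sum _ fun k _ => hpdc k i k)
    · exact continuous_finset_sum _ fun l _ => continuous_finset_sum _ fun k _ =>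
        (hQe l k).mul (continuous_finset_sum _ fun i _ => continuous_finset_sum _ fun j _ =>
          (hpdc k i j).mul (hpdc l i j))
  have hK : IsCompact (closure Ω) := hΩb.isCompact_closure
  have hvol : volume Ω < ⊤ := lt_of_le_of_lt (measure_mono subset_closure) hK.measure_lt_top
  have hldInt : IntegrableOn (fun x => ldgDensity a c L1 L2 L3 L4 Q x) Ω volume :=
    (hldc.continuousOn.integrableOn_compact hK).mono_set subset_closure
  have hgInt : Integrable (fun x => (ν - |L4| * M) * gradsq Q x - a^2/(4*c))
      (volume.restrict Ω) :=
    (hgrad.const_mul _).sub (integrableOn_const hvol.ne)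
  rw [ge_iff_le]
  calc (ν - |L4| * M) * (∫ x in Ω, gradsq Q x) - a ^ 2 / (4 * c) * (volume Ω).toReal
      = ∫ x in Ω, ((ν - |L4| * M) * gradsq Q x - a^2/(4*c)) := by
        rw [integral_sub (hgrad.const_mul _) (integrableOn_const hvol.ne),
          integral_const_mul, setIntegral_const]
        rw [smul_eq_mul, measureReal_def]
        ring
    _ ≤ ∫ x in Ω, ldgDensity a c L1 L2 L3 L4 Q x := integral_mono_ae hgInt hldInt hpt

end
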